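/- arXiv:1402.2362 — 2 statements merged into one kernel-verified Lean document; each statement's English description precedes it below -/
import Mathlib

section
/- Let λ₁,…,λₙ be real numbers and 1 ≤ r < n. If S_r(λ₁,…,λₙ) = 0 and S_{r+1}(λ₁,…,λₙ) = 0, then S_j(λ₁,…,λₙ) = 0 for all r ≤ j ≤ n. -/
/-- The `r`-th elementary symmetric polynomial of `v`. -/
noncomputable def esymm (n r : ℕ) (v : Fin n → ℝ) : ℝ :=
  ∑ s ∈ Finset.powersetCard r Finset.univ, ∏ i ∈ s, v i

open Finset Polynomial

private lemma esymm_eq_multiset (n j : ℕ) (v : Fin n → ℝ) :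
    (Multiset.map v Finset.univ.val).esymm j = esymm n j v :=
  Finset.esymm_map_val v Finset.univ j

private lemma esymm_one_eq (m : ℕ) (v : Fin m → ℝ) : esymm m 1 v = ∑ i, v i := by
  unfold esymm
  rw [Finset.powersetCard_one, Finset.sum_map]
  simp

private lemma esymm_self_eq (m : ℕ) (v : Fin m → ℝ) : esymm m m v = ∏ i, v i := by
  unfold esymm
  have h := Finset.powersetCard_self (Finset.univ : Finset (Fin m))
  simp only [Finset.card_univ, Fintype.card_fin] at h
  rw [h, Finset.sum_singleton]

private lemma sq_sum_aux {ι : Type*} [DecidableEq ι] (s : Finset ι) (v : ι → ℝ) :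
    (∑ i ∈ s, v i) ^ 2
      = ∑ i ∈ s, v i ^ 2 + 2 * ∑ t ∈ s.powersetCard 2, ∏ i ∈ t, v i := by
  induction s using Finset.induction with
  | empty =>
    rw [Finset.powersetCard_eq_empty.mpr (by simp)]
    simp
  | @insert x s hx ih =>
    have h2 : (insert x s).powersetCard 2
        = s.powersetCard 2 ∪ (s.powersetCard 1).image (insert x) :=
      Finset.powersetCard_succ_insert hx 1
    have hdisj : Disjoint (s.powersetCard 2) ((s.powersetCard 1).image (insert x)) := by
      rw [Finset.disjoint_right]
      intro t ht ht2
      obtain ⟨u, hu, rfl⟩ := Finset.mem_image.mp ht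
      have : insert x u ⊆ s := (Finset.mem_powersetCard.mp ht2).1
      exact hx (this (Finset.mem_insert_self x u))
    have hinj : ∀ u1 ∈ s.powersetCard 1, ∀ u2 ∈ s.powersetCard 1,
        insert x u1 = insert x u2 → u1 = u2 := by
      intro u1 h1 u2 h2 he
      have hx1 : x ∉ u1 := fun h => hx ((Finset.mem_powersetCard.mp h1).1 h)
      have hx2 : x ∉ u2 := fun h => hx ((Finset.mem_powersetCard.mp h2).1 h)
      rw [← Finset.erase_insert hx1, ← Finset.erase_insert hx2, he]
    have himg : ∑ t ∈ (s.powersetCard 1).image (insert x), ∏ i ∈ t, v i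
        = v x * ∑ i ∈ s, v i := by
      rw [Finset.sum_image hinj]
      have : ∀ u ∈ s.powersetCard 1, ∏ i ∈ insert x u, v i = v x * ∏ i ∈ u, v i := by
        intro u hu
        exact Finset.prod_insert (fun h => hx ((Finset.mem_powersetCard.mp hu).1 h))
      rw [Finset.sum_congr rfl this]
      rw [← Finset.mul_sum]
      congr 1
      rw [Finset.powersetCard_one, Finset.sum_map]
      simp
    rw [Finset.sum_insert hx, Finset.sum_insert hx, h2, Finset.sum_union hdisj, himg]
    ring_nf
    ring_nf at ih
    linarith [ih]

private lemma compl_esymm (m k : ℕ) (hk : k ≤ m) (v : Fin m → ℝ) (hv : ∀ i, v i ≠ 0) :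
    esymm m k (fun i => (v i)⁻¹) * ∏ i, v i = esymm m (m - k) v := by
  unfold esymm
  rw [Finset.sum_mul]
  refine Finset.sum_nbij' (fun t => tᶜ) (fun t => tᶜ) ?_ ?_ ?_ ?_ ?_
  · intro t ht
    rw [Finset.mem_powersetCard_univ] at ht ⊢
    rw [Finset.card_compl, ht, Fintype.card_fin]
  · intro t ht
    rw [Finset.mem_powersetCard_univ] at ht ⊢
    rw [Finset.card_compl, ht, Fintype.card_fin]
    omega
  · intro t _; exact compl_compl t
  · intro t _; exact compl_compl t
  · intro t ht
    have : (∏ i ∈ t, (v i)⁻¹) * ∏ i ∈ t, v i = 1 := by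
      rw [← Finset.prod_mul_distrib]
      exact Finset.prod_eq_one fun i _ => inv_mul_cancel₀ (hv i)
    calc (∏ i ∈ t, (v i)⁻¹) * ∏ i, v i
        = (∏ i ∈ t, (v i)⁻¹) * ((∏ i ∈ t, v i) * ∏ i ∈ tᶜ, v i) := by
          rw [Finset.prod_mul_prod_compl]
      _ = ∏ i ∈ tᶜ, v i := by rw [← mul_assoc, this, one_mul]

private lemma last_step (m : ℕ) (hm : 2 ≤ m) (v : Fin m → ℝ)
    (h1 : esymm m (m - 1) v = 0) (h2 : esymm m (m - 2) v = 0) :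
    esymm m m v = 0 := by
  by_contra h
  rw [esymm_self_eq] at h
  have hv : ∀ i, v i ≠ 0 := by
    intro i hi
    exact h (Finset.prod_eq_zero (Finset.mem_univ i) hi)
  set w : Fin m → ℝ := fun i => (v i)⁻¹ with hw
  have e1 : esymm m 1 w = 0 := by
    have hc := compl_esymm m 1 (by omega) v hv
    rw [h1] at hc
    rcases mul_eq_zero.mp hc with h' | h'
    · exact h'
    · exact absurd h' h
  have e2 : esymm m 2 w = 0 := by
    have hc := compl_esymm m 2 (by omega) v hv
    rw [h2] at hc
    rcases mul_eq_zero.mp hc with h' | h'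
    · exact h'
    · exact absurd h' h
  have hsq : ∑ i, (w i) ^ 2 = 0 := by
    have hs := sq_sum_aux (Finset.univ : Finset (Fin m)) w
    rw [← esymm_one_eq] at hs
    have : ∑ t ∈ (Finset.univ : Finset (Fin m)).powersetCard 2, ∏ i ∈ t, w i
        = esymm m 2 w := rfl
    rw [this, e1, e2] at hs
    simpa using hs.symm
  have hall : ∀ i ∈ (Finset.univ : Finset (Fin m)), (w i) ^ 2 = 0 :=
    (Finset.sum_eq_zero_iff_of_nonneg fun i _ => sq_nonneg _).mp hsq
  have h0 : w ⟨0, by omega⟩ = 0 := by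
    have := hall ⟨0, by omega⟩ (Finset.mem_univ _)
    exact pow_eq_zero_iff (by norm_num) |>.mp this
  exact hv _ (inv_eq_zero.mp h0)

private lemma exists_map (k : ℕ) (R : Multiset ℝ) (h : Multiset.card R = k) :
    ∃ w : Fin k → ℝ, Multiset.map w Finset.univ.val = R := by
  have hlen : R.toList.length = k := by rw [Multiset.length_toList, h]
  refine ⟨fun i => R.toList.get (Fin.cast hlen.symm i), ?_⟩
  rw [Fin.univ_val_map]
  have hofn : List.ofFn (fun i : Fin k => R.toList.get (Fin.cast hlen.symm i))
      = R.toList := by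
    apply List.ext_getElem
    · simp [hlen]
    · intro n h1 h2
      simp
  rw [hofn, Multiset.coe_toList]

private lemma deriv_step (m : ℕ) (hm : 1 ≤ m) (v : Fin m → ℝ) :
    ∃ w : Fin (m - 1) → ℝ, ∀ j : ℕ, j ≤ m - 1 →
      (m : ℝ) * esymm (m - 1) j w = ((m - j : ℕ) : ℝ) * esymm m j v := by
  set M : Multiset ℝ := Multiset.map v Finset.univ.val with hM
  have hMcard : Multiset.card M = m := by simp [hM]
  set p : ℝ[X] := (M.map fun a => X - C a).prod with hp
  have hproots : p.roots = M := roots_multiset_prod_X_sub_C M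
  have hpdeg : p.natDegree = m := by
    rw [hp, natDegree_multiset_prod_X_sub_C_eq_card, hMcard]
  have hpmonic : p.Monic := monic_multiset_prod_of_monic _ _ fun a _ => monic_X_sub_C a
  set q := derivative p with hq
  have hqdeg_le : q.natDegree ≤ m - 1 := (natDegree_derivative_le p).trans (by rw [hpdeg])
  have hge : m - 1 ≤ Multiset.card q.roots := by
    have hc := p.card_roots_le_derivative
    rw [hproots, hMcard, ← hq] at hc
    omega
  have hqdeg : q.natDegree = m - 1 :=
    le_antisymm hqdeg_le (hge.trans (card_roots' q))
  have hcardq : Multiset.card q.roots = m - 1 :=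
    le_antisymm ((card_roots' q).trans hqdeg_le) hge
  have hqroots : Multiset.card q.roots = q.natDegree := by rw [hcardq, hqdeg]
  have hlead : q.leadingCoeff = (m : ℝ) := by
    rw [leadingCoeff, hqdeg, hq, coeff_derivative]
    have h1 : m - 1 + 1 = m := by omega
    rw [h1, ← hpdeg, ← leadingCoeff, hpmonic.leadingCoeff, one_mul]
    rw [Nat.cast_sub (show 1 ≤ p.natDegree by omega), Nat.cast_one]
    ring
  obtain ⟨w, hwmap⟩ := exists_map (m - 1) q.roots hcardq
  refine ⟨w, fun j hj => ?_⟩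
  have h1 : q.coeff (m - 1 - j) = q.leadingCoeff * (-1) ^ j * q.roots.esymm j := by
    have hc := Polynomial.coeff_eq_esymm_roots_of_card hqroots
      (show m - 1 - j ≤ q.natDegree by omega)
    rw [hqdeg] at hc
    have hj' : m - 1 - (m - 1 - j) = j := by omega
    rw [hj'] at hc
    exact hc
  have h2 : q.coeff (m - 1 - j) = p.coeff (m - j) * ((m - j : ℕ) : ℝ) := by
    rw [hq, coeff_derivative]
    have hj' : m - 1 - j + 1 = m - j := by omega
    rw [hj']
    have hc1 : ((m - 1 - j : ℕ) : ℝ) = ((m - j : ℕ) : ℝ) - 1 := by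
      have he : m - 1 - j = (m - j) - 1 := by omega
      rw [he, Nat.cast_sub (show 1 ≤ m - j by omega), Nat.cast_one]
    push_cast [hc1]
    ring
  have h3 : p.coeff (m - j) = (-1) ^ j * M.esymm j := by
    have hc := Multiset.prod_X_sub_C_coeff M
      (show m - j ≤ Multiset.card M by rw [hMcard]; omega)
    rw [hMcard] at hc
    have hj' : m - (m - j) = j := by omega
    rw [hj'] at hc
    exact hc
  have hkey := h1.symm.trans h2
  rw [hlead, h3] at hkey
  have hew : q.roots.esymm j = esymm (m - 1) j w := by
    rw [← hwmap, esymm_eq_multiset]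
  have hev : M.esymm j = esymm m j v := by rw [hM, esymm_eq_multiset]
  rw [hew, hev] at hkey
  have hne : ((-1 : ℝ) ^ j) ≠ 0 := pow_ne_zero _ (by norm_num)
  have : (-1 : ℝ) ^ j * ((m : ℝ) * esymm (m - 1) j w)
      = (-1 : ℝ) ^ j * (((m - j : ℕ) : ℝ) * esymm m j v) := by
    ring_nf
    ring_nf at hkey
    linarith [hkey]
  exact mul_left_cancel₀ hne this

private lemma key_lemma : ∀ m : ℕ, ∀ r : ℕ, 1 ≤ r → r < m → ∀ v : Fin m → ℝ,
    esymm m r v = 0 → esymm m (r + 1) v = 0 →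
    ∀ j : ℕ, r ≤ j → j ≤ m → esymm m j v = 0 := by
  intro m
  induction m using Nat.strong_induction_on with
  | _ m ih =>
    intro r hr hrm v h1 h2 j hj1 hj2
    rcases eq_or_lt_of_le hj1 with rfl | hj1'
    · exact h1
    by_cases hjr : j = r + 1
    · rw [hjr]; exact h2
    have hj2' : r + 2 ≤ j := by omega
    have hm3 : 3 ≤ m := by omega
    obtain ⟨w, hw⟩ := deriv_step m (by omega) v
    have hmne : (m : ℝ) ≠ 0 := Nat.cast_ne_zero.mpr (by omega)
    have hwvan : ∀ k : ℕ, k ≤ m - 1 → esymm m k v = 0 → esymm (m - 1) k w = 0 := by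
      intro k hk hv0
      have hk' := hw k hk
      rw [hv0, mul_zero] at hk'
      rcases mul_eq_zero.mp hk' with h' | h'
      · exact absurd h' hmne
      · exact h'
    have hw0 : ∀ k : ℕ, r ≤ k → k ≤ m - 1 → esymm (m - 1) k w = 0 := by
      apply ih (m - 1) (by omega) r hr (by omega) w
      · exact hwvan r (by omega) h1
      · exact hwvan (r + 1) (by omega) h2
    have hv0 : ∀ k : ℕ, r ≤ k → k ≤ m - 1 → esymm m k v = 0 := by
      intro k hk1 hk2
      have hk' := hw k hk2
      rw [hw0 k hk1 hk2, mul_zero] at hk'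
      have hne : ((m - k : ℕ) : ℝ) ≠ 0 := Nat.cast_ne_zero.mpr (by omega)
      rcases mul_eq_zero.mp hk'.symm with h' | h'
      · exact absurd h' hne
      · exact h'
    rcases eq_or_lt_of_le hj2 with rfl | hjlt
    · exact last_step j (by omega) v
        (hv0 (j - 1) (by omega) (by omega))
        (hv0 (j - 2) (by omega) (by omega))
    · exact hv0 j hj1 (by omega)

/-- Caminha, Proposition 1(c): if `S_r = S_{r+1} = 0` then `S_j = 0` for all `r ≤ j ≤ n`. -/
theorem esymm_vanishing_propagates (n r : ℕ) (hr : 1 ≤ r) (hrn : r < n)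
    (lam : Fin n → ℝ) (h1 : esymm n r lam = 0) (h2 : esymm n (r + 1) lam = 0) :
    ∀ j : ℕ, r ≤ j → j ≤ n → esymm n j lam = 0 :=
  key_lemma n r hr hrn lam h1 h2
end

section
/- Let λ₁,…,λₙ be real numbers and 1 ≤ r < n. If the elementary symmetric polynomials satisfy S_r(λ) = 0 and S_{r+1}(λ) = 0, then at most r−1 of the λᵢ are nonzero. -/
open Polynomial

/-! Auxiliary lemmas on `Multiset.esymm`. -/

private lemma mesymm_zero (s : Multiset ℝ) : s.esymm 0 = 1 := by
  simp [Multiset.esymm, Multiset.powersetCard_zero_left]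

private lemma mesymm_one (s : Multiset ℝ) : s.esymm 1 = s.sum := by
  rw [Multiset.esymm, Multiset.powersetCard_one, Multiset.map_map]
  simp

private lemma mesymm_eq_zero (s : Multiset ℝ) {n : ℕ} (h : Multiset.card s < n) :
    s.esymm n = 0 := by
  rw [Multiset.esymm, Multiset.powersetCard_eq_empty _ h]
  simp

private lemma mesymm_cons (a : ℝ) (s : Multiset ℝ) (n : ℕ) :
    (a ::ₘ s).esymm (n + 1) = s.esymm (n + 1) + a * s.esymm n := by
  rw [Multiset.esymm, Multiset.powersetCard_cons, Multiset.map_add, Multiset.sum_add,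
    Multiset.map_map]
  congr 1
  rw [Multiset.esymm, ← Multiset.sum_map_mul_left]
  congr 1
  apply Multiset.map_congr rfl
  intro t _
  simp [Multiset.prod_cons]

/-- Reflection identity: `e_j(s) = (∏ s) * e_k(s⁻¹)` when `j + k = card s`. -/
private lemma mesymm_reflect (s : Multiset ℝ) (hs : ∀ x ∈ s, x ≠ 0) :
    ∀ j k : ℕ, j + k = Multiset.card s →
      s.esymm j = s.prod * (s.map (·⁻¹)).esymm k := by
  induction s using Multiset.induction with
  | empty =>
    intro j k h
    simp only [Multiset.card_zero] at h
    obtain ⟨rfl, rfl⟩ : j = 0 ∧ k = 0 := by omega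
    simp [mesymm_zero]
  | cons a s ih =>
    intro j k hjk
    have ha : a ≠ 0 := hs a (Multiset.mem_cons_self a s)
    have hs' : ∀ x ∈ s, x ≠ 0 := fun x hx => hs x (Multiset.mem_cons_of_mem hx)
    have hcard : j + k = Multiset.card s + 1 := by
      simpa using hjk
    have hmap : (a ::ₘ s).map (·⁻¹) = a⁻¹ ::ₘ s.map (·⁻¹) := Multiset.map_cons _ _ _
    have hcardmap : Multiset.card (s.map (·⁻¹)) = Multiset.card s := Multiset.card_map _ _
    have haa : a * a⁻¹ = 1 := mul_inv_cancel₀ ha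
    rcases j with _ | j'
    · -- j = 0, k = card s + 1
      obtain ⟨k', rfl⟩ : ∃ k', k = k' + 1 := ⟨Multiset.card s, by omega⟩
      have hk' : k' = Multiset.card s := by omega
      rw [hmap, mesymm_cons, mesymm_zero, Multiset.prod_cons]
      have hz : (s.map (·⁻¹)).esymm (k' + 1) = 0 :=
        mesymm_eq_zero _ (by rw [hcardmap]; omega)
      have hIH := ih hs' 0 k' (by omega)
      rw [mesymm_zero] at hIH
      rw [hz]
      calc (1 : ℝ) = (a * a⁻¹) * (s.prod * (s.map (·⁻¹)).esymm k') := by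
            rw [haa, ← hIH]; ring
        _ = a * s.prod * (0 + a⁻¹ * (s.map (·⁻¹)).esymm k') := by ring
    · -- j = j' + 1
      rw [mesymm_cons, hmap, Multiset.prod_cons]
      rcases k with _ | k'
      · -- k = 0
        have hj' : j' = Multiset.card s := by omega
        have hz : s.esymm (j' + 1) = 0 := mesymm_eq_zero _ (by omega)
        have hIH := ih hs' j' 0 (by omega)
        rw [mesymm_zero] at hIH
        rw [hz, mesymm_zero, hIH]
        ring
      · -- k = k' + 1
        rw [mesymm_cons]
        have hIH1 := ih hs' (j' + 1) k' (by omega)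
        have hIH2 := ih hs' j' (k' + 1) (by omega)
        rw [hIH1, hIH2]
        calc s.prod * (s.map (·⁻¹)).esymm k' + a * (s.prod * (s.map (·⁻¹)).esymm (k' + 1))
            = a * s.prod * (s.map (·⁻¹)).esymm (k' + 1) +
              (a * a⁻¹) * (s.prod * (s.map (·⁻¹)).esymm k') := by rw [haa]; ring
          _ = a * s.prod * ((s.map (·⁻¹)).esymm (k' + 1) + a⁻¹ * (s.map (·⁻¹)).esymm k') := by
              ring

private lemma msq_sum (s : Multiset ℝ) :
    s.sum ^ 2 = (s.map fun x => x ^ 2).sum + 2 * s.esymm 2 := by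
  induction s using Multiset.induction with
  | empty => simp [mesymm_eq_zero (0 : Multiset ℝ) (n := 2) (by simp)]
  | cons a s ih =>
    rw [Multiset.sum_cons, Multiset.map_cons, Multiset.sum_cons, mesymm_cons, mesymm_one]
    nlinarith [ih]

/-- Key impossibility: nonzero reals can't have the top two (below full) esymms vanish. -/
private lemma key_impossible (s : Multiset ℝ) (hs : ∀ x ∈ s, x ≠ 0)
    (hc : 1 ≤ Multiset.card s)
    (e1 : s.esymm (Multiset.card s - 1) = 0)
    (e2 : s.esymm (Multiset.card s - 2) = 0) : False := by
  rcases Nat.lt_or_ge (Multiset.card s) 2 with h2 | h2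
  · -- card = 1
    have h1 : Multiset.card s = 1 := by omega
    rw [h1] at e1
    rw [mesymm_zero] at e1
    norm_num at e1
  · have hprod : s.prod ≠ 0 := by
      intro h
      exact hs 0 (Multiset.prod_eq_zero_iff.1 h) rfl
    have hr1 := mesymm_reflect s hs (Multiset.card s - 1) 1 (by omega)
    have hr2 := mesymm_reflect s hs (Multiset.card s - 2) 2 (by omega)
    rw [e1] at hr1
    rw [e2] at hr2
    have ht1 : (s.map (·⁻¹)).esymm 1 = 0 := by
      rcases mul_eq_zero.1 hr1.symm with h | h
      · exact absurd h hprod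
      · exact h
    have ht2 : (s.map (·⁻¹)).esymm 2 = 0 := by
      rcases mul_eq_zero.1 hr2.symm with h | h
      · exact absurd h hprod
      · exact h
    rw [mesymm_one] at ht1
    have hsq := msq_sum (s.map (·⁻¹))
    rw [ht1, ht2] at hsq
    have hzero : ((s.map (·⁻¹)).map fun x => x ^ 2).sum = 0 := by linarith
    -- but the sum of squares is positive since card ≥ 1 and all elements nonzero
    obtain ⟨a, hamem⟩ := Multiset.card_pos_iff_exists_mem.1 (by omega : 0 < Multiset.card s)
    obtain ⟨t, ht⟩ := Multiset.exists_cons_of_mem hamem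
    have ha : a ≠ 0 := hs a hamem
    have hrest : (0 : ℝ) ≤ ((t.map (·⁻¹)).map fun x => x ^ 2).sum :=
      Multiset.sum_nonneg (by
        intro x hx
        obtain ⟨y, _, rfl⟩ := Multiset.mem_map.1 hx
        positivity)
    rw [ht] at hzero
    simp only [Multiset.map_cons, Multiset.sum_cons] at hzero
    have hapos : 0 < (a⁻¹) ^ 2 := by positivity
    linarith

private lemma card_roots_le_iterate (p : ℝ[X]) (m : ℕ) :
    Multiset.card p.roots ≤ Multiset.card ((derivative (R := ℝ))^[m] p).roots + m := by
  induction m with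
  | zero => simp
  | succ m ih =>
    refine ih.trans ?_
    rw [Function.iterate_succ_apply']
    have := Polynomial.card_roots_le_derivative ((derivative (R := ℝ))^[m] p)
    omega

/-- Core step: for a real-rooted polynomial, two consecutive vanishing coefficients
propagate downward. -/
private lemma core_step (p : ℝ[X]) (hcard : Multiset.card p.roots = p.natDegree)
    (t : ℕ) (ht : 1 ≤ t) (htd : t + 1 ≤ p.natDegree)
    (h1 : p.coeff t = 0) (h2 : p.coeff (t + 1) = 0) : p.coeff (t - 1) = 0 := by
  by_contra hne
  set w := (derivative (R := ℝ))^[t - 1] p with hw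
  have hc0 : w.coeff 0 ≠ 0 := by
    rw [hw, Polynomial.coeff_iterate_derivative, zero_add]
    have hd : (((t - 1).descFactorial (t - 1) : ℕ) : ℝ) ≠ 0 := by
      rw [Nat.descFactorial_self]
      exact_mod_cast Nat.factorial_ne_zero _
    rw [nsmul_eq_mul]
    exact mul_ne_zero hd hne
  have hwne : w ≠ 0 := by
    intro h
    rw [h] at hc0
    simp at hc0
  have hdeg : w.natDegree ≤ p.natDegree - (t - 1) := Polynomial.natDegree_iterate_derivative _ _
  have hroots1 : Multiset.card p.roots ≤ Multiset.card w.roots + (t - 1) :=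
    card_roots_le_iterate p (t - 1)
  have hroots2 : Multiset.card w.roots ≤ w.natDegree := Polynomial.card_roots' w
  have hD : w.natDegree = p.natDegree - (t - 1) := by omega
  have hwcard : Multiset.card w.roots = w.natDegree := by omega
  have hD2 : 2 ≤ w.natDegree := by omega
  have hc1 : w.coeff 1 = 0 := by
    rw [hw, Polynomial.coeff_iterate_derivative]
    have h1t : 1 + (t - 1) = t := by omega
    rw [h1t, h1, smul_zero]
  have hc2 : w.coeff 2 = 0 := by
    rw [hw, Polynomial.coeff_iterate_derivative]
    have h2t : 2 + (t - 1) = t + 1 := by omega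
    rw [h2t, h2, smul_zero]
  have hnz : ∀ x ∈ w.roots, x ≠ 0 := by
    intro x hx hx0
    subst hx0
    have hroot := Polynomial.isRoot_of_mem_roots hx
    rw [Polynomial.IsRoot] at hroot
    rw [Polynomial.coeff_zero_eq_eval_zero] at hc0
    exact hc0 hroot
  have hlc : w.leadingCoeff ≠ 0 := Polynomial.leadingCoeff_ne_zero.2 hwne
  have e1 : w.roots.esymm (Multiset.card w.roots - 1) = 0 := by
    have hv := Polynomial.coeff_eq_esymm_roots_of_card hwcard (k := 1) (by omega)
    rw [hc1] at hv
    rw [hwcard]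
    rcases mul_eq_zero.1 hv.symm with h | h
    · rcases mul_eq_zero.1 h with h' | h'
      · exact absurd h' hlc
      · exact absurd h' (by positivity)
    · exact h
  have e2 : w.roots.esymm (Multiset.card w.roots - 2) = 0 := by
    have hv := Polynomial.coeff_eq_esymm_roots_of_card hwcard (k := 2) (by omega)
    rw [hc2] at hv
    rw [hwcard]
    rcases mul_eq_zero.1 hv.symm with h | h
    · rcases mul_eq_zero.1 h with h' | h'
      · exact absurd h' hlc
      · exact absurd h' (by positivity)
    · exact h
  exact key_impossible w.roots hnz (by omega) e1 e2

/-- The main multiset version. -/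
private lemma main_multiset (r : ℕ) (hr : 1 ≤ r) (s : Multiset ℝ) (hs : ∀ x ∈ s, x ≠ 0)
    (h1 : s.esymm r = 0) (h2 : s.esymm (r + 1) = 0) : Multiset.card s ≤ r - 1 := by
  by_contra hcon
  have hk : r ≤ Multiset.card s := by omega
  set k := Multiset.card s with hkdef
  have hprod : s.prod ≠ 0 := by
    intro h
    exact hs 0 (Multiset.prod_eq_zero_iff.1 h) rfl
  have hself : s.esymm k = s.prod := by
    have := mesymm_reflect s hs k 0 (by omega)
    rwa [mesymm_zero, mul_one] at this
  rcases eq_or_lt_of_le hk with heq | hlt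
  · exact hprod (by rw [← hself, ← heq, h1])
  · -- r + 1 ≤ k
    set p := (s.map fun a => X - C a).prod with hp
    have hmonic : p.Monic :=
      Polynomial.monic_multiset_prod_of_monic s _ (fun a _ => Polynomial.monic_X_sub_C a)
    have hpd : p.natDegree = k := Polynomial.natDegree_multiset_prod_X_sub_C_eq_card s
    have hproots : p.roots = s := Polynomial.roots_multiset_prod_X_sub_C s
    have hcard : Multiset.card p.roots = p.natDegree := by rw [hproots, hpd]
    have hcoeff : ∀ i, i ≤ k → p.coeff i = (-1) ^ (k - i) * s.esymm (k - i) := fun i hi =>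
      Multiset.prod_X_sub_C_coeff s hi
    have claim : ∀ m, m ≤ k - r - 1 → p.coeff (k - r - 1 - m) = 0 ∧ p.coeff (k - r - m) = 0 := by
      intro m
      induction m with
      | zero =>
        intro _
        constructor
        · rw [hcoeff _ (by omega), show k - (k - r - 1 - 0) = r + 1 by omega, h2, mul_zero]
        · rw [hcoeff _ (by omega), show k - (k - r - 0) = r by omega, h1, mul_zero]
      | succ m ih =>
        intro hm
        obtain ⟨ha, hb⟩ := ih (by omega)
        constructor
        · have hbb : p.coeff (k - r - 1 - m + 1) = 0 := by
            rwa [show k - r - 1 - m + 1 = k - r - m by omega]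
          have := core_step p hcard (k - r - 1 - m) (by omega)
            (by rw [hpd]; omega) ha hbb
          rwa [show k - r - 1 - m - 1 = k - r - 1 - (m + 1) by omega] at this
        · rwa [show k - r - (m + 1) = k - r - 1 - m by omega]
    have hfin := (claim (k - r - 1) le_rfl).1
    rw [show k - r - 1 - (k - r - 1) = 0 by omega] at hfin
    rw [hcoeff 0 (by omega), Nat.sub_zero, hself] at hfin
    rcases mul_eq_zero.1 hfin with h | h
    · exact absurd h (by positivity)
    · exact hprod h

/-- If `S_r = S_{r+1} = 0` then at most `r - 1` of the `λᵢ` are nonzero. -/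
theorem esymm_vanishing_card (n r : ℕ) (hr : 1 ≤ r) (hrn : r < n)
    (lam : Fin n → ℝ) (h1 : esymm n r lam = 0) (h2 : esymm n (r + 1) lam = 0) :
    (Finset.univ.filter fun i => lam i ≠ 0).card ≤ r - 1 := by
  classical
  set T := Finset.univ.filter fun i => lam i ≠ 0 with hT
  set s : Multiset ℝ := T.val.map lam with hsdef
  have hcs : Multiset.card s = T.card := by
    rw [hsdef, Multiset.card_map]; rfl
  have hes : ∀ j, s.esymm j = esymm n j lam := by
    intro j
    rw [hsdef, Finset.esymm_map_val, esymm]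
    apply Finset.sum_subset
    · exact Finset.powersetCard_mono (Finset.subset_univ T)
    · intro A hA hA2
      have hAcard : A.card = j := (Finset.mem_powersetCard.1 hA).2
      have hns : ¬A ⊆ T := fun hsub => hA2 (Finset.mem_powersetCard.2 ⟨hsub, hAcard⟩)
      obtain ⟨i, hiA, hiT⟩ := Finset.not_subset.1 hns
      have hlam : lam i = 0 := by
        by_contra h
        exact hiT (Finset.mem_filter.2 ⟨Finset.mem_univ i, h⟩)
      exact Finset.prod_eq_zero hiA hlam
  have hnz : ∀ x ∈ s, x ≠ 0 := by
    intro x hx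
    obtain ⟨i, hi, rfl⟩ := Multiset.mem_map.1 hx
    exact (Finset.mem_filter.1 (show i ∈ T from hi)).2
  have := main_multiset r hr s hnz (by rw [hes r]; exact h1) (by rw [hes (r + 1)]; exact h2)
  omega
end
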